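/- Let f be a triangle in R² and k ≥ 3. The total number of the degrees of freedom for the rotated Hu–Zhang element — (i) vertex values σ(x) for the 3 vertices (3 dofs each), (ii) edge moments (σt, w)_e for w ∈ [(λ0λ1)P_{k−2}(e)]² on each of the 3 edges (2(k−1) dofs each), and (iii) interior dofs on B^{rot;S}_{f,k} (3·(k−1)k/2 dofs) — equals dim P_k(f; S) = 3(k+1)(k+2)/2. Moreover, any σ ∈ P_k(f;S) vanishing at all these degrees of freedom is zero, provided the interior bilinear form (P_{hess B} σ, P_{hess B} η) + (rot σ, rot η) is an inner product on B^{rot;S}_{f,k}. -/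

import Mathlib

open MvPolynomial MeasureTheory

/-- The L²(f) inner product of two matrix-valued polynomial fields over the
triangle `T`. -/
noncomputable def matL2 (T : Set (Fin 2 → ℝ))
    (ρ τ : Fin 2 → Fin 2 → MvPolynomial (Fin 2) ℝ) : ℝ :=
  ∫ x in T, ∑ a, ∑ b, eval x (ρ a b) * eval x (τ a b)

/-- The L²(f) inner product of the rowwise rotations of two matrix fields. -/
noncomputable def rotL2 (T : Set (Fin 2 → ℝ))
    (ρ τ : Fin 2 → Fin 2 → MvPolynomial (Fin 2) ℝ) : ℝ :=
  ∫ x in T, ∑ a, eval x (pderiv 1 (ρ a 0) - pderiv 0 (ρ a 1)) *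
    eval x (pderiv 1 (τ a 0) - pderiv 0 (τ a 1))

/-- `hess B¹_{f,k-4}`: the Hessians of `(λ0λ1λ2)² P_{k-4}(f)`. -/
def hessBubble (k : ℕ) (lam : Fin 3 → MvPolynomial (Fin 2) ℝ) :
    Set (Fin 2 → Fin 2 → MvPolynomial (Fin 2) ℝ) :=
  {ρ | ∃ w : MvPolynomial (Fin 2) ℝ, w.totalDegree ≤ k - 4 ∧
    ∀ a b, ρ a b = pderiv a (pderiv b ((lam 0 * lam 1 * lam 2) ^ 2 * w))}

/-- `τ` is the L²(f)-orthogonal projection of `σ` onto `hess B¹_{f,k-4}`. -/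
def IsHessProj (k : ℕ) (lam : Fin 3 → MvPolynomial (Fin 2) ℝ)
    (T : Set (Fin 2 → ℝ)) (σ τ : Fin 2 → Fin 2 → MvPolynomial (Fin 2) ℝ) : Prop :=
  τ ∈ hessBubble k lam ∧ ∀ ρ ∈ hessBubble k lam, matL2 T σ ρ = matL2 T τ ρ

/-- `B^{rot;S}_{f,k}`: symmetric matrix fields of degree `≤ k` with vanishing
tangential trace on each edge of `f`. -/
def rotSBubble (k : ℕ) (v : Fin 3 → Fin 2 → ℝ) :
    Set (Fin 2 → Fin 2 → MvPolynomial (Fin 2) ℝ) :=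
  {σ | (∀ a b, (σ a b).totalDegree ≤ k) ∧ (∀ a b, σ a b = σ b a) ∧
    ∀ m : Fin 3, ∀ x ∈ segment ℝ (v (m + 1)) (v (m + 2)), ∀ a,
      ∑ b, eval x (σ a b) * (v (m + 1) b - v (m + 2) b) = 0}


lemma aux_eval_aeval (g : Fin 2 → Polynomial ℝ) (s : ℝ) (φ : MvPolynomial (Fin 2) ℝ) :
    (MvPolynomial.aeval g φ).eval s = eval (fun i => (g i).eval s) φ := by
  induction φ using MvPolynomial.induction_on with
  | C a => simp
  | add p q hp hq => simp [hp, hq]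
  | mul_X p i hp => simp [hp]

lemma aux_natDegree_aeval (g : Fin 2 → Polynomial ℝ) (hg : ∀ i, (g i).natDegree ≤ 1)
    (φ : MvPolynomial (Fin 2) ℝ) : (MvPolynomial.aeval g φ).natDegree ≤ φ.totalDegree := by
  conv_lhs => rw [φ.as_sum, map_sum]
  apply Polynomial.natDegree_sum_le_of_forall_le
  intro u hu
  rw [aeval_monomial]
  refine (Polynomial.natDegree_mul_le).trans ?_
  have h1 : (algebraMap ℝ (Polynomial ℝ) (coeff u φ)).natDegree = 0 := by
    simp [Polynomial.algebraMap_eq]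
  rw [h1, zero_add]
  refine (Polynomial.natDegree_prod_le _ _).trans ?_
  refine le_trans ?_ (MvPolynomial.le_totalDegree hu)
  rw [Finsupp.sum]
  apply Finset.sum_le_sum
  intro i _
  exact Polynomial.natDegree_pow_le.trans (by nlinarith [hg i, Nat.zero_le (u i)])

lemma aux_poly_zero {p : Polynomial ℝ} (hnn : ∀ s, 0 ≤ p.eval s)
    (hz : (∫ s in (0:ℝ)..1, p.eval s) = 0) : p = 0 := by
  by_contra hp
  have hroots : Set.Finite {x | p.IsRoot x} := p.finite_setOf_isRoot hp
  have hcont : Continuous fun s : ℝ => p.eval s := p.continuous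
  have hint : IntegrableOn (fun s => p.eval s) (Set.Ioc (0:ℝ) 1) := hcont.integrableOn_Ioc
  rw [intervalIntegral.integral_of_le (by norm_num)] at hz
  have hae : (fun s => p.eval s) =ᵐ[volume.restrict (Set.Ioc (0:ℝ) 1)] 0 :=
    (integral_eq_zero_iff_of_nonneg (fun s => hnn s) hint).mp hz
  have hmeas : MeasurableSet {s : ℝ | p.eval s ≠ 0} :=
    (hcont.measurable (measurableSet_singleton 0).compl)
  have hnull : volume ({s : ℝ | p.eval s ≠ 0} ∩ Set.Ioc (0:ℝ) 1) = 0 := by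
    have h := MeasureTheory.ae_iff.mp hae
    simp only [Pi.zero_apply] at h
    rw [Measure.restrict_apply hmeas] at h
    exact h
  have hsub : Set.Ioc (0:ℝ) 1 ⊆
      ({s : ℝ | p.eval s ≠ 0} ∩ Set.Ioc (0:ℝ) 1) ∪ {x | p.IsRoot x} := by
    intro s hs
    by_cases h : p.eval s = 0
    · exact Or.inr h
    · exact Or.inl ⟨h, hs⟩
  have hle : volume (Set.Ioc (0:ℝ) 1) ≤
      volume ({s : ℝ | p.eval s ≠ 0} ∩ Set.Ioc (0:ℝ) 1) + volume {x | p.IsRoot x} :=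
    (measure_mono hsub).trans (measure_union_le _ _)
  rw [hnull, hroots.measure_zero volume, zero_add] at hle
  have h2 : volume (Set.Ioc (0:ℝ) 1) = 0 := le_zero_iff.mp hle
  simp [Real.volume_Ioc] at h2

lemma aux_mv_zero {p : MvPolynomial (Fin 2) ℝ} {U : Set (Fin 2 → ℝ)}
    (hU : IsOpen U) (hne : U.Nonempty) (h : ∀ x ∈ U, eval x p = 0) : p = 0 := by
  have hA : AnalyticOnNhd ℝ (fun x : Fin 2 → ℝ => eval x p) Set.univ :=
    AnalyticOnNhd.eval_linearMap (LinearMap.id : (Fin 2 → ℝ) →ₗ[ℝ] (Fin 2 → ℝ)) p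
  obtain ⟨x₀, hx₀⟩ := hne
  have hev : (fun x : Fin 2 → ℝ => eval x p) =ᶠ[nhds x₀] 0 :=
    Filter.eventually_of_mem (hU.mem_nhds hx₀) h
  have := hA.eqOn_zero_of_preconnected_of_eventuallyEq_zero isPreconnected_univ
    (Set.mem_univ x₀) hev
  exact MvPolynomial.funext fun x => by simpa using this (Set.mem_univ x)

lemma matL2_cont (ρ τ : Fin 2 → Fin 2 → MvPolynomial (Fin 2) ℝ) :
    Continuous fun x : Fin 2 → ℝ => ∑ a, ∑ b, eval x (ρ a b) * eval x (τ a b) :=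
  continuous_finset_sum _ fun a _ => continuous_finset_sum _ fun b _ =>
    (MvPolynomial.continuous_eval _).mul (MvPolynomial.continuous_eval _)

lemma matL2_add_left {T : Set (Fin 2 → ℝ)} (hT : IsCompact T)
    (ρ ρ' τ : Fin 2 → Fin 2 → MvPolynomial (Fin 2) ℝ) :
    matL2 T (ρ + ρ') τ = matL2 T ρ τ + matL2 T ρ' τ := by
  unfold matL2
  rw [← integral_add ((matL2_cont ρ τ).continuousOn.integrableOn_compact hT)
    ((matL2_cont ρ' τ).continuousOn.integrableOn_compact hT)]
  congr 1
  funext x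
  simp [Pi.add_apply, add_mul, Finset.sum_add_distrib]

lemma matL2_smul_left {T : Set (Fin 2 → ℝ)}
    (c : ℝ) (ρ τ : Fin 2 → Fin 2 → MvPolynomial (Fin 2) ℝ) :
    matL2 T (c • ρ) τ = c * matL2 T ρ τ := by
  unfold matL2
  rw [← integral_const_mul]
  congr 1
  funext x
  simp only [Pi.smul_apply, MvPolynomial.smul_eq_C_mul, map_mul, eval_C, Finset.mul_sum,
    mul_assoc]

lemma matL2_comm (T : Set (Fin 2 → ℝ)) (ρ τ : Fin 2 → Fin 2 → MvPolynomial (Fin 2) ℝ) :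
    matL2 T ρ τ = matL2 T τ ρ := by
  unfold matL2
  congr 1
  funext x
  congr 1
  funext a
  exact Finset.sum_congr rfl fun b _ => mul_comm _ _

lemma matL2_add_right {T : Set (Fin 2 → ℝ)} (hT : IsCompact T)
    (τ ρ ρ' : Fin 2 → Fin 2 → MvPolynomial (Fin 2) ℝ) :
    matL2 T τ (ρ + ρ') = matL2 T τ ρ + matL2 T τ ρ' := by
  rw [matL2_comm T τ (ρ + ρ'), matL2_add_left hT, matL2_comm T ρ τ, matL2_comm T ρ' τ]

lemma matL2_smul_right {T : Set (Fin 2 → ℝ)}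
    (c : ℝ) (τ ρ : Fin 2 → Fin 2 → MvPolynomial (Fin 2) ℝ) :
    matL2 T τ (c • ρ) = c * matL2 T τ ρ := by
  rw [matL2_comm T τ (c • ρ), matL2_smul_left, matL2_comm T ρ τ]

lemma matL2_definite {v : Fin 3 → Fin 2 → ℝ} (hv : AffineIndependent ℝ v)
    {ρ : Fin 2 → Fin 2 → MvPolynomial (Fin 2) ℝ}
    (h : matL2 (convexHull ℝ (Set.range v)) ρ ρ = 0) : ρ = 0 := by
  classical
  set T := convexHull ℝ (Set.range v) with hT
  have hTcomp : IsCompact T := (Set.finite_range v).isCompact_convexHull ℝ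
  set F : (Fin 2 → ℝ) → ℝ := fun x => ∑ a, ∑ b, eval x (ρ a b) * eval x (ρ a b) with hF
  have hcont : Continuous F := matL2_cont ρ ρ
  have hF0 : ∀ x, 0 ≤ F x := fun x =>
    Finset.sum_nonneg fun a _ => Finset.sum_nonneg fun b _ => mul_self_nonneg _
  have hint : IntegrableOn F T := hcont.continuousOn.integrableOn_compact hTcomp
  have h' : (∫ x in T, F x) = 0 := h
  have hae : F =ᵐ[volume.restrict T] 0 :=
    (integral_eq_zero_iff_of_nonneg (fun x => hF0 x) hint).mp h'
  have hmeasF : MeasurableSet (F ⁻¹' {(0:ℝ)}ᶜ) :=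
    hcont.measurable (measurableSet_singleton 0).compl
  have hnull : volume ((F ⁻¹' {(0:ℝ)}ᶜ) ∩ T) = 0 := by
    have hh := MeasureTheory.ae_iff.mp hae
    simp only [Pi.zero_apply] at hh
    rw [show {a | ¬F a = 0} = F ⁻¹' {(0:ℝ)}ᶜ from rfl, Measure.restrict_apply hmeasF] at hh
    exact hh
  have hzero : ∀ x ∈ interior T, F x = 0 := by
    intro x hx
    by_contra hc
    have hUopen : IsOpen ((F ⁻¹' {(0:ℝ)}ᶜ) ∩ interior T) :=
      (isOpen_compl_singleton.preimage hcont).inter isOpen_interior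
    have hpos : 0 < volume ((F ⁻¹' {(0:ℝ)}ᶜ) ∩ interior T) :=
      hUopen.measure_pos volume ⟨x, hc, hx⟩
    have hz : volume ((F ⁻¹' {(0:ℝ)}ᶜ) ∩ interior T) = 0 :=
      measure_mono_null (Set.inter_subset_inter_right _ interior_subset) hnull
    exact absurd hz hpos.ne'
  have hspan : affineSpan ℝ (Set.range v) = ⊤ := by
    rw [AffineIndependent.affineSpan_eq_top_iff_card_eq_finrank_add_one hv]
    simp [Module.finrank_pi]
  have hne : (interior T).Nonempty := by
    rw [Convex.interior_nonempty_iff_affineSpan_eq_top (convex_convexHull ℝ _)]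
    rw [affineSpan_convexHull]
    exact hspan
  have hab : ∀ a b, ρ a b = 0 := by
    intro a b
    apply aux_mv_zero isOpen_interior hne
    intro x hx
    have h1 := (Finset.sum_eq_zero_iff_of_nonneg
      (fun a _ => Finset.sum_nonneg fun b _ => mul_self_nonneg _)).mp (hzero x hx) a
      (Finset.mem_univ a)
    have h2 := (Finset.sum_eq_zero_iff_of_nonneg
      (fun b _ => mul_self_nonneg _)).mp h1 b (Finset.mem_univ b)
    exact mul_self_eq_zero.mp h2
  funext a b
  simp [hab a b]

lemma hessproj_exists (k : ℕ) (lam : Fin 3 → MvPolynomial (Fin 2) ℝ)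
    {v : Fin 3 → Fin 2 → ℝ} (hv : AffineIndependent ℝ v)
    (σ : Fin 2 → Fin 2 → MvPolynomial (Fin 2) ℝ) :
    ∃ τ, IsHessProj k lam (convexHull ℝ (Set.range v)) σ τ := by
  classical
  set T := convexHull ℝ (Set.range v) with hT
  have hTcomp : IsCompact T := (Set.finite_range v).isCompact_convexHull ℝ
  let L : MvPolynomial (Fin 2) ℝ →ₗ[ℝ] (Fin 2 → Fin 2 → MvPolynomial (Fin 2) ℝ) :=
  { toFun := fun w a b => pderiv a (pderiv b ((lam 0 * lam 1 * lam 2) ^ 2 * w))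
    map_add' := fun x y => by
      funext a b
      show pderiv a (pderiv b ((lam 0 * lam 1 * lam 2) ^ 2 * (x + y))) = _
      rw [mul_add, map_add, map_add]
      rfl
    map_smul' := fun c x => by
      funext a b
      show pderiv a (pderiv b ((lam 0 * lam 1 * lam 2) ^ 2 * (c • x))) = _
      rw [mul_smul_comm, Derivation.map_smul, Derivation.map_smul]
      rfl }
  let S := MvPolynomial.restrictTotalDegree (Fin 2) ℝ (k - 4)
  let W := S.map L
  haveI : FiniteDimensional ℝ W := inferInstance
  have hWmem : ∀ ρ, ρ ∈ hessBubble k lam ↔ ρ ∈ W := by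
    intro ρ
    constructor
    · rintro ⟨w, hw, hρ⟩
      exact ⟨w, (MvPolynomial.mem_restrictTotalDegree _ _ _).mpr hw,
        by funext a b; exact (hρ a b).symm⟩
    · rintro ⟨w, hw, rfl⟩
      exact ⟨w, (MvPolynomial.mem_restrictTotalDegree _ _ _).mp hw, fun a b => rfl⟩
  let B : W →ₗ[ℝ] W →ₗ[ℝ] ℝ := LinearMap.mk₂ ℝ (fun τ ρ => matL2 T ↑τ ↑ρ)
    (fun τ τ' ρ => by
      change matL2 T ↑(τ + τ') ↑ρ = matL2 T ↑τ ↑ρ + matL2 T ↑τ' ↑ρ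
      rw [Submodule.coe_add]; exact matL2_add_left hTcomp _ _ _)
    (fun c τ ρ => by
      change matL2 T ↑(c • τ) ↑ρ = c • matL2 T ↑τ ↑ρ
      rw [Submodule.coe_smul]; exact matL2_smul_left _ _ _)
    (fun τ ρ ρ' => by
      change matL2 T ↑τ ↑(ρ + ρ') = matL2 T ↑τ ↑ρ + matL2 T ↑τ ↑ρ'
      rw [Submodule.coe_add]; exact matL2_add_right hTcomp _ _ _)
    (fun c τ ρ => by
      change matL2 T ↑τ ↑(c • ρ) = c • matL2 T ↑τ ↑ρ
      rw [Submodule.coe_smul]; exact matL2_smul_right _ _ _)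
  have hBinj : Function.Injective B := by
    refine LinearMap.ker_eq_bot.mp (LinearMap.ker_eq_bot'.mpr fun τ hτ => ?_)
    have h0 : matL2 T ↑τ ↑τ = 0 := by
      have := DFunLike.congr_fun hτ τ
      simpa [B] using this
    exact Subtype.ext (matL2_definite hv h0)
  haveI : FiniteDimensional ℝ (W →ₗ[ℝ] ℝ) := Module.dual_finite
  have hBsurj : Function.Surjective B :=
    (LinearMap.injective_iff_surjective_of_finrank_eq_finrank
      (by rw [Subspace.dual_finrank_eq])).mp hBinj
  let ψ : Module.Dual ℝ W :=
  { toFun := fun ρ => matL2 T σ ↑ρ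
    map_add' := fun ρ ρ' => by
      change matL2 T σ ↑(ρ + ρ') = matL2 T σ ↑ρ + matL2 T σ ↑ρ'
      rw [Submodule.coe_add]; exact matL2_add_right hTcomp _ _ _
    map_smul' := fun c ρ => by
      change matL2 T σ ↑(c • ρ) = c • matL2 T σ ↑ρ
      rw [Submodule.coe_smul, matL2_smul_right]; rfl }
  obtain ⟨τ, hτ⟩ := hBsurj ψ
  refine ⟨↑τ, (hWmem _).mpr τ.2, ?_⟩
  intro ρ hρ
  have hρW : ρ ∈ W := (hWmem ρ).mp hρ
  have := DFunLike.congr_fun hτ ⟨ρ, hρW⟩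
  simpa [B, ψ] using this.symm

/-- Unisolvency of the (rotated) Hu–Zhang element of degree `k ≥ 3`:
the number of degrees of freedom (vertex values, edge moments against
`[(λ0λ1)P_{k-2}(e)]²`, and interior moments on `B^{rot;S}_{f,k}`) equals
`dim P_k(f;S) = 3(k+1)(k+2)/2`, and — provided the interior bilinear form
`(P_{hess B}·, P_{hess B}·) + (rot·, rot·)` is an inner product on
`B^{rot;S}_{f,k}` — any `σ ∈ P_k(f;S)` vanishing at all these degrees of
freedom is zero. -/
theorem stmt_17 (k : ℕ) (hk : 3 ≤ k)
    (v : Fin 3 → Fin 2 → ℝ) (hv : AffineIndependent ℝ v)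
    (lam : Fin 3 → MvPolynomial (Fin 2) ℝ)
    (hdeg : ∀ i, (lam i).totalDegree ≤ 1)
    (heval : ∀ i j, eval (v j) (lam i) = if i = j then 1 else 0)
    -- the interior bilinear form is an inner product on B^{rot;S}_{f,k}
    (hip : ∀ η ∈ rotSBubble k v,
      ∀ τ, IsHessProj k lam (convexHull ℝ (Set.range v)) η τ →
      matL2 (convexHull ℝ (Set.range v)) τ τ +
        rotL2 (convexHull ℝ (Set.range v)) η η = 0 → η = 0)
    (σ : Fin 2 → Fin 2 → MvPolynomial (Fin 2) ℝ)
    (hσdeg : ∀ a b, (σ a b).totalDegree ≤ k)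
    (hσsym : ∀ a b, σ a b = σ b a)
    -- vanishing vertex values
    (hvert : ∀ j a b, eval (v j) (σ a b) = 0)
    -- vanishing edge moments against [(λ0λ1)P_{k-2}(e)]²
    (hedge : ∀ m : Fin 3, ∀ q : Fin 2 → Polynomial ℝ,
      (∀ a, (q a).natDegree ≤ k - 2) →
      (∫ s in (0:ℝ)..1, ∑ a,
        (∑ b, eval (fun c => v (m + 1) c + s * (v (m + 2) c - v (m + 1) c)) (σ a b) *
          (v (m + 2) b - v (m + 1) b)) * (s * (1 - s) * (q a).eval s)) = 0)
    -- vanishing interior moments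
    (hint : ∀ η ∈ rotSBubble k v, ∀ τσ τη,
      IsHessProj k lam (convexHull ℝ (Set.range v)) σ τσ →
      IsHessProj k lam (convexHull ℝ (Set.range v)) η τη →
      matL2 (convexHull ℝ (Set.range v)) τσ τη +
        rotL2 (convexHull ℝ (Set.range v)) σ η = 0) :
    (3 * 3 + 3 * (2 * (k - 1)) + 3 * ((k - 1) * k / 2) = 3 * ((k + 1) * (k + 2) / 2)) ∧
    σ = 0 := by
  classical
  constructor
  · -- dimension count
    have key : (k+1)*(k+2) = (k-1)*k + 4*k + 2 := by
      obtain ⟨j, rfl⟩ : ∃ j, k = j+1 := ⟨k-1, by omega⟩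
      simp only [Nat.add_sub_cancel]
      ring
    obtain ⟨a, ha⟩ := Nat.even_mul_succ_self (k-1)
    obtain ⟨c, hc⟩ := Nat.even_mul_succ_self (k+1)
    rw [show k - 1 + 1 = k by omega] at ha
    rw [show k + 1 + 1 = k + 2 by omega] at hc
    have ha' : (k-1)*k = 2*a := by rw [two_mul]; exact ha
    have hc' : (k+1)*(k+2) = 2*c := by rw [two_mul]; exact hc
    rw [ha', hc'] at key ⊢
    omega
  · -- unisolvency
    have hbub : σ ∈ rotSBubble k v := by
      refine ⟨hσdeg, hσsym, ?_⟩
      intro m x hx a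
      set g : Fin 2 → Polynomial ℝ := fun c =>
        Polynomial.C (v (m+1) c) + Polynomial.X * Polynomial.C (v (m+2) c - v (m+1) c)
        with hg
      have hgdeg : ∀ c, (g c).natDegree ≤ 1 := by
        intro c
        have h1 : (Polynomial.X * Polynomial.C (v (m+2) c - v (m+1) c)).natDegree ≤ 1 :=
          Polynomial.natDegree_mul_le.trans (by simp)
        exact (Polynomial.natDegree_add_le _ _).trans (max_le (by simp) h1)
      set P : Fin 2 → Polynomial ℝ := fun a =>
        ∑ b, (MvPolynomial.aeval g (σ a b)) * Polynomial.C (v (m+2) b - v (m+1) b) with hP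
      have hPeval : ∀ a (s : ℝ), (P a).eval s =
          ∑ b, eval (fun c => v (m+1) c + s * (v (m+2) c - v (m+1) c)) (σ a b) *
            (v (m+2) b - v (m+1) b) := by
        intro a s
        simp only [hP, Polynomial.eval_finset_sum, Polynomial.eval_mul, Polynomial.eval_C]
        refine Finset.sum_congr rfl fun b _ => ?_
        rw [aux_eval_aeval]
        have hfun : (fun i => Polynomial.eval s (g i)) =
            (fun c => v (m+1) c + s * (v (m+2) c - v (m+1) c)) := by
          funext c
          simp [hg]
        rw [hfun]
      have hPdeg : ∀ a, (P a).natDegree ≤ k := by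
        intro a
        apply Polynomial.natDegree_sum_le_of_forall_le
        intro b _
        refine Polynomial.natDegree_mul_le.trans ?_
        simp only [Polynomial.natDegree_C, add_zero]
        exact (aux_natDegree_aeval g hgdeg _).trans (hσdeg a b)
      have hP0 : ∀ a, (P a).eval 0 = 0 := by
        intro a
        rw [hPeval]
        have hxv : (fun c => v (m+1) c + (0:ℝ) * (v (m+2) c - v (m+1) c)) = v (m+1) := by
          funext c; ring
        rw [hxv]
        simp [hvert]
      have hP1 : ∀ a, (P a).eval 1 = 0 := by
        intro a
        rw [hPeval]
        have hxv : (fun c => v (m+1) c + (1:ℝ) * (v (m+2) c - v (m+1) c)) = v (m+2) := by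
          funext c; ring
        rw [hxv]
        simp [hvert]
      have hfac : ∀ a, ∃ Q : Polynomial ℝ,
          P a = (Polynomial.X * (Polynomial.X - Polynomial.C 1)) * Q ∧ Q.natDegree ≤ k - 2 := by
        intro a
        by_cases hPa : P a = 0
        · exact ⟨0, by simp [hPa], by simp⟩
        · have hd0 : Polynomial.X ∣ P a :=
            Polynomial.X_dvd_iff.mpr (by rw [Polynomial.coeff_zero_eq_eval_zero]; exact hP0 a)
          have hd1 : (Polynomial.X - Polynomial.C 1) ∣ P a :=
            Polynomial.dvd_iff_isRoot.mpr (hP1 a)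
          have hco : IsCoprime (Polynomial.X - Polynomial.C (0:ℝ))
              (Polynomial.X - Polynomial.C 1) :=
            Polynomial.isCoprime_X_sub_C_of_isUnit_sub (by norm_num)
          rw [map_zero, sub_zero] at hco
          obtain ⟨Q, hQ⟩ := hco.mul_dvd hd0 hd1
          refine ⟨Q, hQ, ?_⟩
          have hQ0 : Q ≠ 0 := by rintro rfl; rw [mul_zero] at hQ; exact hPa hQ
          have hM0 : (Polynomial.X * (Polynomial.X - Polynomial.C 1) : Polynomial ℝ) ≠ 0 :=
            (Polynomial.monic_X.mul (Polynomial.monic_X_sub_C 1)).ne_zero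
          have hdeg2 : (Polynomial.X * (Polynomial.X - Polynomial.C (1:ℝ))).natDegree = 2 := by
            rw [Polynomial.natDegree_mul Polynomial.X_ne_zero (Polynomial.X_sub_C_ne_zero 1),
              Polynomial.natDegree_X, Polynomial.natDegree_X_sub_C]
          have hdk := hPdeg a
          rw [hQ, Polynomial.natDegree_mul hM0 hQ0, hdeg2] at hdk
          omega
      choose Q hQfac hQdeg using hfac
      have hedge' := hedge m (fun a => -(Q a))
        (fun a => by simpa [Polynomial.natDegree_neg] using hQdeg a)
      have hint0 : (∫ s in (0:ℝ)..1, Polynomial.eval s (∑ a, (P a)^2)) = 0 := by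
        refine Eq.trans ?_ hedge'
        apply intervalIntegral.integral_congr
        intro s _
        simp only [Polynomial.eval_finset_sum, Polynomial.eval_pow]
        refine Finset.sum_congr rfl fun a _ => ?_
        have e1 : (P a).eval s = (s * (s - 1)) * (Q a).eval s := by
          rw [hQfac a]
          simp only [Polynomial.eval_mul, Polynomial.eval_sub, Polynomial.eval_X,
            Polynomial.eval_one, Polynomial.eval_C]
        rw [← hPeval a s]
        simp only [Polynomial.eval_neg]
        rw [e1]
        ring
      have hR : (∑ a, (P a)^2 : Polynomial ℝ) = 0 := by
        apply aux_poly_zero _ hint0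
        intro s
        simp only [Polynomial.eval_finset_sum, Polynomial.eval_pow]
        positivity
      have hPa0 : ∀ a, P a = 0 := by
        intro a2
        apply Polynomial.funext
        intro r
        have h := congrArg (fun p => Polynomial.eval r p) hR
        simp only [Polynomial.eval_finset_sum, Polynomial.eval_pow, Polynomial.eval_zero] at h
        have h2 := (Finset.sum_eq_zero_iff_of_nonneg (fun i _ => sq_nonneg _)).mp h a2
          (Finset.mem_univ _)
        simpa using (pow_eq_zero_iff (two_ne_zero)).mp h2
      obtain ⟨u, b, hu, hb0, hub, hxx⟩ := hx
      have hxparam : x = fun c => v (m+1) c + b * (v (m+2) c - v (m+1) c) := by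
        funext c
        rw [← hxx]
        simp only [Pi.add_apply, Pi.smul_apply, smul_eq_mul]
        have hu' : u = 1 - b := by linarith
        rw [hu']; ring
      have hsum : ∑ bb, eval (fun c => v (m+1) c + b * (v (m+2) c - v (m+1) c)) (σ a bb) *
          (v (m+2) bb - v (m+1) bb) = 0 := by
        rw [← hPeval a b, hPa0 a, Polynomial.eval_zero]
      rw [hxparam]
      have hneg : ∑ bb, eval (fun c => v (m+1) c + b * (v (m+2) c - v (m+1) c)) (σ a bb) *
          (v (m+1) bb - v (m+2) bb) =
          -(∑ bb, eval (fun c => v (m+1) c + b * (v (m+2) c - v (m+1) c)) (σ a bb) *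
          (v (m+2) bb - v (m+1) bb)) := by
        rw [← Finset.sum_neg_distrib]
        exact Finset.sum_congr rfl fun bb _ => by ring
      rw [hneg, hsum, neg_zero]
    obtain ⟨τ, hτ⟩ := hessproj_exists k lam hv σ
    exact hip σ hbub τ hτ (hint σ hbub τ τ hτ hτ)
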